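/- Let P be a nonsingular k×k matrix over a field F that is super-regular, i.e., every square submatrix of P is nonsingular. Then the inverse matrix P⁻¹ is also super-regular: every square submatrix of P⁻¹ is nonsingular. -/
import Mathlib


/-- A square matrix is super-regular if every square submatrix (selected by injective
choices of rows and columns of equal number) is nonsingular. -/
def SuperRegular {F : Type*} [Field F] {k : ℕ} (M : Matrix (Fin k) (Fin k) F) : Prop :=
  ∀ (m : ℕ) (r c : Fin m → Fin k), Function.Injective r → Function.Injective c →
    IsUnit (M.submatrix r c).det

/-- The inverse of a nonsingular super-regular matrix is super-regular. -/
theorem superRegular_inv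
    {F : Type*} [Field F] {k : ℕ} (P : Matrix (Fin k) (Fin k) F)
    (hP : IsUnit P.det) (hsr : SuperRegular P) :
    SuperRegular P⁻¹ := by
  intro m r c hr hc
  rw [isUnit_iff_ne_zero]
  intro hdet
  obtain ⟨v, hv, hAv⟩ := (Matrix.exists_mulVec_eq_zero_iff).2 hdet
  classical
  -- ranges of r and c
  set sR : Finset (Fin k) := Finset.univ.image r with hsR
  set sC : Finset (Fin k) := Finset.univ.image c with hsC
  have hsRcard : sR.card = m := by
    rw [hsR, Finset.card_image_of_injective _ hr, Finset.card_univ, Fintype.card_fin]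
  have hsCcard : sC.card = m := by
    rw [hsC, Finset.card_image_of_injective _ hc, Finset.card_univ, Fintype.card_fin]
  have hcompR : sRᶜ.card = k - m := by
    rw [Finset.card_compl, hsRcard, Fintype.card_fin]
  have hcompC : sCᶜ.card = k - m := by
    rw [Finset.card_compl, hsCcard, Fintype.card_fin]
  set r' : Fin (k - m) → Fin k := ⇑(sRᶜ.orderEmbOfFin hcompR) with hr'
  set c' : Fin (k - m) → Fin k := ⇑(sCᶜ.orderEmbOfFin hcompC) with hc'
  -- extend v by zero
  set w : Fin k → F := Function.extend c v 0 with hw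
  have hwc : ∀ i, w (c i) = v i := fun i => hc.extend_apply v 0 i
  have hw0 : ∀ j, j ∉ sC → w j = 0 := by
    intro j hj
    rw [hw, Function.extend_def]
    split
    · rename_i h
      exact absurd (Finset.mem_image.2 ⟨h.choose, Finset.mem_univ _, h.choose_spec⟩) hj
    · rfl
  set u : Fin k → F := P⁻¹.mulVec w with hu
  have hPu : P.mulVec u = w := by
    rw [hu, Matrix.mulVec_mulVec, Matrix.mul_nonsing_inv P hP, Matrix.one_mulVec]
  -- u vanishes on range of r
  have hur : ∀ i, u (r i) = 0 := by
    intro i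
    have : u (r i) = ∑ j ∈ sC, P⁻¹ (r i) j * w j := by
      rw [hu]
      simp only [Matrix.mulVec, dotProduct]
      refine (Finset.sum_subset (Finset.subset_univ _) ?_).symm
      intro j _ hj
      rw [hw0 j hj, mul_zero]
    rw [this, hsC, Finset.sum_image (fun a _ b _ h => hc h)]
    have := congrFun hAv i
    simp only [Matrix.mulVec, dotProduct, Matrix.submatrix_apply, Pi.zero_apply] at this
    rw [← this]
    exact Finset.sum_congr rfl (fun j _ => by rw [hwc])
  -- u vanishes on complement of range of r too
  have hu0 : ∀ j, j ∉ sR → u j = 0 := by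
    set B : Matrix (Fin (k - m)) (Fin (k - m)) F := P.submatrix c' r' with hB
    have hBdet : IsUnit B.det :=
      hsr _ c' r' (sCᶜ.orderEmbOfFin hcompC).injective (sRᶜ.orderEmbOfFin hcompR).injective
    set z : Fin (k - m) → F := fun a => u (r' a) with hz
    have hBz : B.mulVec z = 0 := by
      funext t
      have h1 : w (c' t) = 0 :=
        hw0 _ (Finset.mem_compl.1 (sCᶜ.orderEmbOfFin_mem hcompC t))
      have h2 : ∑ j, P (c' t) j * u j = 0 := by
        have := congrFun hPu (c' t)
        simpa [Matrix.mulVec, dotProduct, h1] using this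
      have h3 : ∑ j ∈ sRᶜ, P (c' t) j * u j = 0 := by
        rw [← h2]
        refine Finset.sum_subset (Finset.subset_univ _) ?_
        intro j _ hj
        rw [Finset.mem_compl, not_not] at hj
        obtain ⟨i, _, rfl⟩ := Finset.mem_image.1 hj
        rw [hur, mul_zero]
      have h4 : sRᶜ = Finset.univ.image r' := by
        ext x
        simp only [Finset.mem_image, Finset.mem_univ, true_and]
        constructor
        · intro hx
          have : x ∈ Set.range r' := by
            rw [hr', Finset.range_orderEmbOfFin]; exact hx
          exact this
        · rintro ⟨a, rfl⟩
          exact sRᶜ.orderEmbOfFin_mem hcompR a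
      rw [h4, Finset.sum_image (fun a _ b _ h => (sRᶜ.orderEmbOfFin hcompR).injective h)] at h3
      simpa [Matrix.mulVec, dotProduct, hB, hz] using h3
    have hz0 : z = 0 := by
      by_contra hz0
      exact (isUnit_iff_ne_zero.1 hBdet)
        (Matrix.exists_mulVec_eq_zero_iff.1 ⟨z, hz0, hBz⟩)
    intro j hj
    have : j ∈ Set.range r' := by
      rw [hr', Finset.range_orderEmbOfFin]; exact Finset.mem_compl.2 hj
    obtain ⟨a, rfl⟩ := this
    exact congrFun hz0 a
  -- hence u = 0, so w = 0, so v = 0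
  have huzero : u = 0 := by
    funext j
    by_cases h : j ∈ sR
    · obtain ⟨i, _, rfl⟩ := Finset.mem_image.1 h
      exact hur i
    · exact hu0 j h
  have hwzero : w = 0 := by rw [← hPu, huzero, Matrix.mulVec_zero]
  apply hv
  funext i
  have := congrFun hwzero (c i)
  rwa [hwc] at this
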